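/- The three-dimensional augmentation pairing satisfies Frobenius associativity: for all x, y, z ∈ E3_N, ⟨μ₃(x, y), z⟩₃ = ⟨x, μ₃(y, z)⟩₃. -/

import Mathlib

/-- Basis elements of the one-dimensional enlarged complex of period `N`:
points `P a`, elemental sticks `S a` (the interval `[a, a+1]`), and
infinitesimal sticks `I a`. -/
inductive B (N : ℕ) : Type where
  | P : ZMod N → B N
  | S : ZMod N → B N
  | I : ZMod N → B N
  deriving DecidableEq

/-- The enlarged one-dimensional chain complex: the free ℚ-vector space on `B N`. -/
abbrev EC (N : ℕ) : Type := B N →₀ ℚ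

namespace B

variable {N : ℕ}

/-- Codimension: 1 for points, 0 for sticks and infinitesimal sticks. -/
def cod : B N → ℕ
  | P _ => 1
  | _ => 0

/-- Basis element viewed in `EC N`. -/
noncomputable def e (u : B N) : EC N := Finsupp.single u 1

/-- The transverse intersection product on basis elements. -/
noncomputable def muB : B N → B N → EC N
  | P _, P _ => 0
  | P a, S b => if b = a ∨ b = a - 1 then Finsupp.single (P a) (1/2) else 0
  | S b, P a => if b = a ∨ b = a - 1 then Finsupp.single (P a) (1/2) else 0
  | P a, I b => if b = a then Finsupp.single (P a) (1/4) else 0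
  | I b, P a => if b = a then Finsupp.single (P a) (1/4) else 0
  | S a, S b =>
      if b = a then
        Finsupp.single (I a) (-1) + Finsupp.single (S a) 1 + Finsupp.single (I (a+1)) (-1)
      else if b = a + 1 then Finsupp.single (I (a+1)) 1
      else if b = a - 1 then Finsupp.single (I a) 1
      else 0
  | S a, I b => if b = a ∨ b = a + 1 then Finsupp.single (I b) (1/2) else 0
  | I b, S a => if b = a ∨ b = a + 1 then Finsupp.single (I b) (1/2) else 0
  | I a, I b => if b = a then Finsupp.single (I a) (1/4) else 0

/-- Boundary on basis elements: `∂ (S a) = P (a+1) - P a`, zero otherwise. -/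
noncomputable def bdB : B N → EC N
  | S a => Finsupp.single (P (a+1)) 1 - Finsupp.single (P a) 1
  | _ => 0

/-- Augmentation on basis elements. -/
def epsB : B N → ℚ
  | P _ => 1
  | _ => 0

end B

/-- Bilinear extension of the basis product to `EC N`. -/
noncomputable def mu {N : ℕ} (x y : EC N) : EC N :=
  x.sum fun u cu => y.sum fun v cv => (cu * cv) • B.muB u v

/-- Linear extension of the boundary to `EC N`. -/
noncomputable def bd {N : ℕ} (x : EC N) : EC N := x.sum fun u cu => cu • B.bdB u

/-- Augmentation `ε : EC N → ℚ`. -/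
noncomputable def eps {N : ℕ} (x : EC N) : ℚ := x.sum fun u cu => cu * B.epsB u

/-- The augmentation pairing `⟨x, y⟩ = ε (μ x y)`. -/
noncomputable def pair {N : ℕ} (x y : EC N) : ℚ := eps (mu x y)

/-- The subcomplex `C_N` spanned by points and elemental sticks. -/
noncomputable def Csub (N : ℕ) : Submodule ℚ (EC N) :=
  Submodule.span ℚ
    (Set.range (fun a : ZMod N => Finsupp.single (B.P a) (1 : ℚ)) ∪
     Set.range (fun a : ZMod N => Finsupp.single (B.S a) (1 : ℚ)))

/-- Basis triples for the three-dimensional complex. -/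
abbrev B3 (N : ℕ) : Type := B N × B N × B N

/-- The enlarged three-dimensional chain complex: free ℚ-vector space on `B3 N`. -/
abbrev E3 (N : ℕ) : Type := B3 N →₀ ℚ

/-- Codimension of a basis triple. -/
def cod3 {N : ℕ} (u : B3 N) : ℕ := u.1.cod + u.2.1.cod + u.2.2.cod

/-- Basis triple viewed in `E3 N`. -/
noncomputable def e3 {N : ℕ} (u : B3 N) : E3 N := Finsupp.single u 1

/-- Trilinear map `EC N → EC N → EC N → E3 N`, `x ⊗ y ⊗ z`. -/
noncomputable def t3 {N : ℕ} (x y z : EC N) : E3 N :=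
  x.sum fun u₁ c₁ => y.sum fun u₂ c₂ => z.sum fun u₃ c₃ =>
    Finsupp.single (u₁, u₂, u₃) (c₁ * c₂ * c₃)

/-- The three-dimensional intersection product on basis triples, with Koszul sign. -/
noncomputable def mu3B {N : ℕ} (u v : B3 N) : E3 N :=
  ((-1 : ℚ) ^ (u.2.1.cod * v.1.cod + u.2.2.cod * v.1.cod + u.2.2.cod * v.2.1.cod)) •
    t3 (B.muB u.1 v.1) (B.muB u.2.1 v.2.1) (B.muB u.2.2 v.2.2)

/-- Bilinear extension of the three-dimensional product to `E3 N`. -/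
noncomputable def mu3 {N : ℕ} (x y : E3 N) : E3 N :=
  x.sum fun u cu => y.sum fun v cv => (cu * cv) • mu3B u v

/-- The three-dimensional boundary on basis triples. -/
noncomputable def bd3B {N : ℕ} (u : B3 N) : E3 N :=
  t3 (B.bdB u.1) (B.e u.2.1) (B.e u.2.2)
    + ((-1 : ℚ) ^ u.1.cod) • t3 (B.e u.1) (B.bdB u.2.1) (B.e u.2.2)
    + ((-1 : ℚ) ^ (u.1.cod + u.2.1.cod)) • t3 (B.e u.1) (B.e u.2.1) (B.bdB u.2.2)

/-- Linear extension of the three-dimensional boundary to `E3 N`. -/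
noncomputable def bd3 {N : ℕ} (x : E3 N) : E3 N := x.sum fun u cu => cu • bd3B u

/-- The three-dimensional augmentation `ε₃`. -/
noncomputable def eps3 {N : ℕ} (x : E3 N) : ℚ :=
  x.sum fun u cu => cu * (B.epsB u.1 * B.epsB u.2.1 * B.epsB u.2.2)

/-- The three-dimensional augmentation pairing. -/
noncomputable def pair3 {N : ℕ} (x y : E3 N) : ℚ := eps3 (mu3 x y)

section Frob
variable {N : ℕ}

lemma eps_zero : eps (0 : EC N) = 0 := Finsupp.sum_zero_index

lemma eps_single (u : B N) (c : ℚ) : eps (Finsupp.single u c) = c * B.epsB u :=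
  Finsupp.sum_single_index (zero_mul _)

lemma eps_add (x y : EC N) : eps (x + y) = eps x + eps y :=
  Finsupp.sum_add_index' (fun _ => zero_mul _) (fun _ b₁ b₂ => add_mul _ _ _)

lemma eps_eq (x : EC N) : eps x = Finsupp.linearCombination ℚ B.epsB x := rfl

lemma eps_smul (c : ℚ) (x : EC N) : eps (c • x) = c * eps x := by
  rw [eps_eq, eps_eq, map_smul, smul_eq_mul]

noncomputable def epsHom : EC N →+ ℚ := ⟨⟨eps, eps_zero⟩, eps_add⟩

lemma eps_fsum {α} (s : α →₀ ℚ) (f : α → ℚ → EC N) :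
    eps (s.sum f) = s.sum fun a c => eps (f a c) := map_finsuppSum epsHom s f

lemma mu_zero_left (y : EC N) : mu 0 y = 0 := Finsupp.sum_zero_index

lemma mu_zero_right (x : EC N) : mu x 0 = 0 := by
  simp [mu, Finsupp.sum_zero_index]

lemma mu_add_left (x x' y : EC N) : mu (x + x') y = mu x y + mu x' y :=
  Finsupp.sum_add_index' (fun _ => by simp) (fun a b₁ b₂ => by
    rw [← Finsupp.sum_add]
    exact Finsupp.sum_congr fun v _ => by rw [add_mul, add_smul])

lemma mu_single_single (u v : B N) (c d : ℚ) :
    mu (Finsupp.single u c) (Finsupp.single v d) = (c * d) • B.muB u v := by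
  rw [mu, Finsupp.sum_single_index, Finsupp.sum_single_index]
  · simp
  · simp

lemma mu_single_left (u : B N) (c : ℚ) (y : EC N) :
    mu (Finsupp.single u c) y = y.sum fun v cv => (c * cv) • B.muB u v :=
  Finsupp.sum_single_index (by simp)

lemma mu_e_right (x : EC N) (w : B N) : mu x (B.e w) = x.sum fun a ca => ca • B.muB a w := by
  rw [mu]
  exact Finsupp.sum_congr fun a _ => by
    rw [B.e, Finsupp.sum_single_index] <;> simp

lemma mu_e_left (u : B N) (y : EC N) : mu (B.e u) y = y.sum fun a ca => ca • B.muB u a := by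
  rw [B.e, mu_single_left]
  exact Finsupp.sum_congr fun a _ => by simp

lemma eps_mu_right (x : EC N) (w : B N) :
    eps (mu x (B.e w)) = x.sum fun a ca => ca * eps (B.muB a w) := by
  rw [mu_e_right, eps_fsum]
  exact Finsupp.sum_congr fun a _ => eps_smul _ _

lemma eps_mu_left (u : B N) (y : EC N) :
    eps (mu (B.e u) y) = y.sum fun a ca => ca * eps (B.muB u a) := by
  rw [mu_e_left, eps_fsum]
  exact Finsupp.sum_congr fun a _ => eps_smul _ _

end Frob

section Frob
variable {N : ℕ}

-- ## eps3 linearity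

lemma eps3_eq (x : E3 N) :
    eps3 x = Finsupp.linearCombination ℚ
      (fun u : B3 N => B.epsB u.1 * B.epsB u.2.1 * B.epsB u.2.2) x := rfl

lemma eps3_zero : eps3 (0 : E3 N) = 0 := Finsupp.sum_zero_index

lemma eps3_single (u : B3 N) (c : ℚ) :
    eps3 (Finsupp.single u c) = c * (B.epsB u.1 * B.epsB u.2.1 * B.epsB u.2.2) :=
  Finsupp.sum_single_index (zero_mul _)

lemma eps3_add (x y : E3 N) : eps3 (x + y) = eps3 x + eps3 y :=
  Finsupp.sum_add_index' (fun _ => zero_mul _) (fun _ _ _ => add_mul _ _ _)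

lemma eps3_smul (c : ℚ) (x : E3 N) : eps3 (c • x) = c * eps3 x := by
  rw [eps3_eq, eps3_eq, map_smul, smul_eq_mul]

noncomputable def eps3Hom : E3 N →+ ℚ := ⟨⟨eps3, eps3_zero⟩, eps3_add⟩

lemma eps3_fsum {α} (s : α →₀ ℚ) (f : α → ℚ → E3 N) :
    eps3 (s.sum f) = s.sum fun a c => eps3 (f a c) := map_finsuppSum eps3Hom s f

-- ## mu3 bilinearity

lemma mu3_eq (x y : E3 N) :
    mu3 x y = Finsupp.linearCombination ℚ
      (fun u : B3 N => y.sum fun v cv => cv • mu3B u v) x := by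
  rw [mu3, Finsupp.linearCombination_apply]
  refine Finsupp.sum_congr fun u _ => ?_
  rw [Finsupp.smul_sum]
  exact Finsupp.sum_congr fun v _ => (mul_smul _ _ _)

lemma mu3_eq' (x y : E3 N) :
    mu3 x y = Finsupp.linearCombination ℚ
      (fun v : B3 N => x.sum fun u cu => cu • mu3B u v) y := by
  rw [mu3, Finsupp.sum_comm, Finsupp.linearCombination_apply]
  refine Finsupp.sum_congr fun v _ => ?_
  rw [Finsupp.smul_sum]
  exact Finsupp.sum_congr fun u _ => by rw [mul_smul, smul_comm]

lemma mu3_zero_left (y : E3 N) : mu3 0 y = 0 := by rw [mu3_eq, map_zero]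

lemma mu3_zero_right (x : E3 N) : mu3 x 0 = 0 := by rw [mu3_eq', map_zero]

lemma mu3_add_left (x x' y : E3 N) : mu3 (x + x') y = mu3 x y + mu3 x' y := by
  rw [mu3_eq, mu3_eq x, mu3_eq x', map_add]

lemma mu3_add_right (x y y' : E3 N) : mu3 x (y + y') = mu3 x y + mu3 x y' := by
  rw [mu3_eq', mu3_eq' x y, mu3_eq' x y', map_add]

lemma mu3_smul_left (c : ℚ) (x y : E3 N) : mu3 (c • x) y = c • mu3 x y := by
  rw [mu3_eq, mu3_eq x, map_smul]

lemma mu3_smul_right (c : ℚ) (x y : E3 N) : mu3 x (c • y) = c • mu3 x y := by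
  rw [mu3_eq', mu3_eq' x y, map_smul]

lemma mu3_single_single (u v : B3 N) (c d : ℚ) :
    mu3 (Finsupp.single u c) (Finsupp.single v d) = (c * d) • mu3B u v := by
  rw [mu3, Finsupp.sum_single_index, Finsupp.sum_single_index]
  · simp
  · simp

lemma mu3_e3_right (x : E3 N) (w : B3 N) :
    mu3 x (e3 w) = x.sum fun t ct => ct • mu3B t w := by
  rw [mu3]
  exact Finsupp.sum_congr fun t _ => by
    rw [e3, Finsupp.sum_single_index] <;> simp

lemma mu3_e3_left (u : B3 N) (y : E3 N) :
    mu3 (e3 u) y = y.sum fun t ct => ct • mu3B u t := by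
  rw [e3, mu3, Finsupp.sum_single_index]
  · exact Finsupp.sum_congr fun t _ => by simp
  · simp

lemma eps3_mu3_e3_right (x : E3 N) (w : B3 N) :
    eps3 (mu3 x (e3 w)) = x.sum fun t ct => ct * eps3 (mu3B t w) := by
  rw [mu3_e3_right, eps3_fsum]
  exact Finsupp.sum_congr fun t _ => eps3_smul _ _

lemma eps3_mu3_e3_left (u : B3 N) (y : E3 N) :
    eps3 (mu3 (e3 u) y) = y.sum fun t ct => ct * eps3 (mu3B u t) := by
  rw [mu3_e3_left, eps3_fsum]
  exact Finsupp.sum_congr fun t _ => eps3_smul _ _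

-- ## t3 sums and factorization

lemma t3_sum (A C D : EC N) (k : B3 N → ℚ) :
    ((t3 A C D).sum fun t ct => ct * k t)
      = A.sum fun a ca => C.sum fun b cb => D.sum fun c cc => (ca * cb * cc) * k (a, b, c) := by
  rw [t3, Finsupp.sum_sum_index (h := fun t ct => ct * k t)
    (fun _ => zero_mul _) (fun _ _ _ => add_mul _ _ _)]
  refine Finsupp.sum_congr fun a _ => ?_
  rw [Finsupp.sum_sum_index (h := fun t ct => ct * k t)
    (fun _ => zero_mul _) (fun _ _ _ => add_mul _ _ _)]
  refine Finsupp.sum_congr fun b _ => ?_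
  rw [Finsupp.sum_sum_index (h := fun t ct => ct * k t)
    (fun _ => zero_mul _) (fun _ _ _ => add_mul _ _ _)]
  exact Finsupp.sum_congr fun c _ => Finsupp.sum_single_index (zero_mul _)

lemma triple_sum_factor (K : ℚ) (A C D : EC N) (f g h : B N → ℚ) :
    (A.sum fun a ca => C.sum fun b cb => D.sum fun c cc =>
        (ca * cb * cc) * (K * (f a * g b * h c)))
      = K * ((A.sum fun a ca => ca * f a) * (C.sum fun b cb => cb * g b)
          * (D.sum fun c cc => cc * h c)) := by
  calc (A.sum fun a ca => C.sum fun b cb => D.sum fun c cc =>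
        (ca * cb * cc) * (K * (f a * g b * h c)))
      = A.sum (fun a ca => C.sum fun b cb =>
          (K * (ca * f a) * (cb * g b)) * (D.sum fun c cc => cc * h c)) := by
        refine Finsupp.sum_congr fun a _ => Finsupp.sum_congr fun b _ => ?_
        rw [Finsupp.mul_sum]
        exact Finsupp.sum_congr fun c _ => by ring
    _ = A.sum (fun a ca => (K * (ca * f a) * (D.sum fun c cc => cc * h c))
          * (C.sum fun b cb => cb * g b)) := by
        refine Finsupp.sum_congr fun a _ => ?_
        rw [Finsupp.mul_sum]
        exact Finsupp.sum_congr fun b _ => by ring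
    _ = K * ((A.sum fun a ca => ca * f a) * (C.sum fun b cb => cb * g b)
          * (D.sum fun c cc => cc * h c)) := by
        rw [Finsupp.sum_mul, Finsupp.sum_mul, Finsupp.mul_sum]
        refine Finsupp.sum_congr fun a _ => ?_
        ring

lemma eps3_t3 (X Y Z : EC N) : eps3 (t3 X Y Z) = eps X * eps Y * eps Z := by
  have : eps3 (t3 X Y Z) = (t3 X Y Z).sum fun t ct =>
      ct * (B.epsB t.1 * B.epsB t.2.1 * B.epsB t.2.2) := rfl
  rw [this, t3_sum]
  have := triple_sum_factor (N := N) 1 X Y Z B.epsB B.epsB B.epsB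
  simp only [one_mul] at this
  rw [this, eps, eps, eps]

-- ## codimension additivity on supports

lemma cod_muB {u v b : B N} (h : B.muB u v b ≠ 0) : b.cod = u.cod + v.cod := by
  cases u <;> cases v <;>
    (simp only [B.muB, Finsupp.coe_zero, Pi.zero_apply, ne_eq] at h
     try split_ifs at h
     all_goals try simp only [Finsupp.add_apply, Finsupp.single_apply, Finsupp.coe_zero,
       Pi.zero_apply] at h
     all_goals try split_ifs at h
     all_goals first
       | exact absurd rfl h
       | (subst_vars; simp_all [B.cod]))

-- ## mu3B structure

lemma mu3B_def (u1 u2 u3 v1 v2 v3 : B N) :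
    mu3B (u1, u2, u3) (v1, v2, v3)
      = ((-1 : ℚ) ^ (u2.cod * v1.cod + u3.cod * v1.cod + u3.cod * v2.cod)) •
        t3 (B.muB u1 v1) (B.muB u2 v2) (B.muB u3 v3) := rfl

lemma eps3_mu3B (u1 u2 u3 v1 v2 v3 : B N) :
    eps3 (mu3B (u1, u2, u3) (v1, v2, v3))
      = ((-1 : ℚ) ^ (u2.cod * v1.cod + u3.cod * v1.cod + u3.cod * v2.cod)) *
        (eps (B.muB u1 v1) * eps (B.muB u2 v2) * eps (B.muB u3 v3)) := by
  rw [mu3B_def, eps3_smul, eps3_t3]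

end Frob

section EpsA
variable {N : ℕ}

lemma eps_ite (c : Prop) [Decidable c] (X Y : EC N) :
    eps (if c then X else Y) = if c then eps X else eps Y := apply_ite _ c X Y

lemma sum_ite (c : Prop) [Decidable c] (X Y : EC N) (φ : B N → ℚ → ℚ) :
    (if c then X else Y).sum φ = if c then X.sum φ else Y.sum φ :=
  apply_ite (fun Z : EC N => Z.sum φ) c X Y

lemma sum_mul_k_zero (k : B N → ℚ) : ((0 : EC N).sum fun a ca => ca * k a) = 0 :=
  Finsupp.sum_zero_index

lemma sum_mul_k_single (x : B N) (q : ℚ) (k : B N → ℚ) :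
    ((Finsupp.single x q).sum fun a ca => ca * k a) = q * k x :=
  Finsupp.sum_single_index (zero_mul _)

lemma sum_mul_k_add (X Y : EC N) (k : B N → ℚ) :
    ((X + Y).sum fun a ca => ca * k a)
      = (X.sum fun a ca => ca * k a) + (Y.sum fun a ca => ca * k a) :=
  Finsupp.sum_add_index' (fun _ => zero_mul _) (fun _ _ _ => add_mul _ _ _)

set_option maxHeartbeats 2000000 in
lemma epsA (hN : 3 ≤ N) (u v w : B N) :
    eps (mu (B.muB u v) (B.e w)) = eps (mu (B.e u) (B.muB v w)) := by
  haveI : NeZero N := ⟨by omega⟩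
  have h1 : (1 : ZMod N) ≠ 0 := by
    intro h
    have hd : (N : ℕ) ∣ 1 := (ZMod.natCast_eq_zero_iff 1 N).mp (by simpa using h)
    have := Nat.le_of_dvd one_pos hd
    omega
  have h2 : (2 : ZMod N) ≠ 0 := by
    intro h
    have hd : (N : ℕ) ∣ 2 := (ZMod.natCast_eq_zero_iff 2 N).mp (by simpa using h)
    have := Nat.le_of_dvd (by norm_num) hd
    omega
  rw [eps_mu_right, eps_mu_left]
  cases u <;> cases v <;> cases w <;>
    simp only [B.muB, sum_ite, sum_mul_k_zero, sum_mul_k_single, sum_mul_k_add,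
      Finsupp.sum_zero_index, eps_ite, eps_add, eps_single, eps_zero, B.epsB] <;>
    split_ifs <;>
    (try norm_num) <;>
    (try (exfalso
          try simp only [not_or] at *
          try casesm* _ ∧ _, _ ∨ _
          all_goals subst_vars
          all_goals try simp only [sub_eq_iff_eq_add, eq_sub_iff_add_eq, left_eq_add,
            right_eq_add, add_eq_left, add_eq_right, add_assoc, sub_add_cancel,
            one_add_one_eq_two] at *
          all_goals first
            | contradiction
            | exact h1 (by assumption)
            | exact h2 (by assumption)
            | exact h1 (by symm; assumption)
            | exact h2 (by symm; assumption)))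

end EpsA

section Core
variable {N : ℕ}

lemma core (hN : 3 ≤ N) (u v w : B3 N) :
    eps3 (mu3 (mu3B u v) (e3 w)) = eps3 (mu3 (e3 u) (mu3B v w)) := by
  obtain ⟨u1, u2, u3⟩ := u
  obtain ⟨v1, v2, v3⟩ := v
  obtain ⟨w1, w2, w3⟩ := w
  rw [mu3B_def u1 u2 u3 v1 v2 v3, mu3B_def v1 v2 v3 w1 w2 w3,
    mu3_smul_left, mu3_smul_right, eps3_smul, eps3_smul,
    eps3_mu3_e3_right, eps3_mu3_e3_left, t3_sum, t3_sum]
  rw [show ((B.muB u1 v1).sum fun a ca => (B.muB u2 v2).sum fun b cb =>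
        (B.muB u3 v3).sum fun c cc => (ca * cb * cc) * eps3 (mu3B (a, b, c) (w1, w2, w3)))
      = (B.muB u1 v1).sum fun a ca => (B.muB u2 v2).sum fun b cb =>
        (B.muB u3 v3).sum fun c cc => (ca * cb * cc) *
          (((-1 : ℚ) ^ ((u2.cod + v2.cod) * w1.cod + (u3.cod + v3.cod) * w1.cod
              + (u3.cod + v3.cod) * w2.cod)) *
            (eps (B.muB a w1) * eps (B.muB b w2) * eps (B.muB c w3))) from
    Finsupp.sum_congr fun a _ => Finsupp.sum_congr fun b hb => Finsupp.sum_congr fun c hc => by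
      rw [eps3_mu3B, cod_muB (Finsupp.mem_support_iff.mp hb),
        cod_muB (Finsupp.mem_support_iff.mp hc)]]
  rw [show ((B.muB v1 w1).sum fun a ca => (B.muB v2 w2).sum fun b cb =>
        (B.muB v3 w3).sum fun c cc => (ca * cb * cc) * eps3 (mu3B (u1, u2, u3) (a, b, c)))
      = (B.muB v1 w1).sum fun a ca => (B.muB v2 w2).sum fun b cb =>
        (B.muB v3 w3).sum fun c cc => (ca * cb * cc) *
          (((-1 : ℚ) ^ (u2.cod * (v1.cod + w1.cod) + u3.cod * (v1.cod + w1.cod)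
              + u3.cod * (v2.cod + w2.cod))) *
            (eps (B.muB u1 a) * eps (B.muB u2 b) * eps (B.muB u3 c))) from
    Finsupp.sum_congr fun a ha => Finsupp.sum_congr fun b hb => Finsupp.sum_congr fun c _ => by
      rw [eps3_mu3B, cod_muB (Finsupp.mem_support_iff.mp ha),
        cod_muB (Finsupp.mem_support_iff.mp hb)]]
  rw [triple_sum_factor, triple_sum_factor]
  rw [← eps_mu_right (B.muB u1 v1) w1, ← eps_mu_right (B.muB u2 v2) w2,
    ← eps_mu_right (B.muB u3 v3) w3,
    ← eps_mu_left u1 (B.muB v1 w1), ← eps_mu_left u2 (B.muB v2 w2),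
    ← eps_mu_left u3 (B.muB v3 w3)]
  rw [epsA hN u1 v1 w1, epsA hN u2 v2 w2, epsA hN u3 v3 w3]
  simp only [← mul_assoc, ← pow_add]
  rw [show u2.cod * v1.cod + u3.cod * v1.cod + u3.cod * v2.cod +
        ((u2.cod + v2.cod) * w1.cod + (u3.cod + v3.cod) * w1.cod + (u3.cod + v3.cod) * w2.cod)
      = v2.cod * w1.cod + v3.cod * w1.cod + v3.cod * w2.cod +
        (u2.cod * (v1.cod + w1.cod) + u3.cod * (v1.cod + w1.cod) + u3.cod * (v2.cod + w2.cod))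
    from by ring]

lemma pair3_zero_left (y : E3 N) : pair3 0 y = 0 := by
  rw [pair3, mu3_zero_left, eps3_zero]

lemma pair3_zero_right (x : E3 N) : pair3 x 0 = 0 := by
  rw [pair3, mu3_zero_right, eps3_zero]

lemma pair3_add_left (x x' y : E3 N) : pair3 (x + x') y = pair3 x y + pair3 x' y := by
  rw [pair3, pair3, pair3, mu3_add_left, eps3_add]

lemma pair3_add_right (x y y' : E3 N) : pair3 x (y + y') = pair3 x y + pair3 x y' := by
  rw [pair3, pair3, pair3, mu3_add_right, eps3_add]

lemma single_eq_smul_e3 (u : B3 N) (c : ℚ) : (Finsupp.single u c : E3 N) = c • e3 u := by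
  rw [e3, Finsupp.smul_single, smul_eq_mul, mul_one]

lemma pair3_single_case (hN : 3 ≤ N) (u v w : B3 N) (c d e : ℚ) :
    pair3 (mu3 (Finsupp.single u c) (Finsupp.single v d)) (Finsupp.single w e)
      = pair3 (Finsupp.single u c) (mu3 (Finsupp.single v d) (Finsupp.single w e)) := by
  rw [pair3, pair3, mu3_single_single, mu3_single_single,
    single_eq_smul_e3 w e, single_eq_smul_e3 u c,
    mu3_smul_left, mu3_smul_right, mu3_smul_left, mu3_smul_right,
    eps3_smul, eps3_smul, eps3_smul, eps3_smul, core hN]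
  ring

end Core

theorem pair3_frobenius' (N : ℕ) (hN : 3 ≤ N) :
    ∀ x y z : E3 N, pair3 (mu3 x y) z = pair3 x (mu3 y z) := by
  intro x y z
  induction x using Finsupp.induction_linear with
  | zero => rw [mu3_zero_left, pair3_zero_left, pair3_zero_left]
  | add f g hf hg => rw [mu3_add_left, pair3_add_left, pair3_add_left, hf, hg]
  | single u c =>
    induction y using Finsupp.induction_linear with
    | zero => rw [mu3_zero_right, mu3_zero_left, pair3_zero_left, pair3_zero_right]
    | add f g hf hg =>
        rw [mu3_add_right, pair3_add_left, mu3_add_left, pair3_add_right, hf, hg]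
    | single v d =>
      induction z using Finsupp.induction_linear with
      | zero => rw [mu3_zero_right, pair3_zero_right, pair3_zero_right]
      | add f g hf hg =>
          rw [pair3_add_right, mu3_add_right, pair3_add_right, hf, hg]
      | single w e => exact pair3_single_case hN u v w c d e

/-- Frobenius associativity of the three-dimensional augmentation pairing. -/
theorem pair3_frobenius (N : ℕ) (hN : 3 ≤ N) :
    ∀ x y z : E3 N, pair3 (mu3 x y) z = pair3 x (mu3 y z) :=
  pair3_frobenius' N hN
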